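/- For an ordered set partition T = (S_1,...,S_k) of [d+1], define e_T = ∑_{i=1}^k i·e_{S_i} ∈ ℝ^{d+1}. Fix (π,τ) ∈ S_{d+1} × S_d, and let T(π,τ;r) denote the rank-r element of the maximal chain ch(π,τ) in O_{d+1} (obtained from the singleton partition ordered by π by removing the bars labeled 1,...,r under τ). Then for each 1 ≤ r ≤ d, e_{T(π,τ;r-1)} − e_{T(π,τ;r)} = e_{Γ^π_{τ^{-1}(r)}}, where Γ^π_i = {π^{-1}(j) : i < j ≤ d+1}. -/

import Mathlib

/-- `eTvec d π τ r` is the vector `e_{T(π,τ;r)} = ∑ᵢ i·e_{Sᵢ}` of the rank-`r` element of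
the maximal chain `ch(π,τ)` in the ordered set partition poset `O_{d+1}` (0-indexed: the
diagram places `π⁻¹(0),…,π⁻¹(d)` in order, the bar in position `j` carries label `τ(j)`,
and the rank-`r` partition is obtained by removing the bars with label `< r`; the coordinate
at `x` is the 1-based index of the block containing `x`). -/
noncomputable def eTvec (d : ℕ) (π : Equiv.Perm (Fin (d+1))) (τ : Equiv.Perm (Fin d))
    (r : ℕ) : Fin (d+1) → ℝ :=
  fun x => 1 + ((Finset.univ.filter
    fun j : Fin d => (j : ℕ) < (π x : ℕ) ∧ r ≤ (τ j : ℕ)).card : ℝ)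

/-- Lemma `lem:diff`: consecutive elements of the maximal chain `ch(π,τ)` satisfy
`e_{T(π,τ;r-1)} − e_{T(π,τ;r)} = e_{Γ^π_{τ⁻¹(r)}}`, where
`Γ^π_i = {π⁻¹(j) : i < j ≤ d+1}`. (0-indexed formulation: for each label `r : Fin d`,
the rank-`r` and rank-`(r+1)` vectors differ by the indicator of
`{x : τ⁻¹(r) < π(x)}`.) -/
theorem eTvec_consecutive_difference (d : ℕ) (π : Equiv.Perm (Fin (d+1)))
    (τ : Equiv.Perm (Fin d)) (r : Fin d) :
    (fun x => eTvec d π τ (r : ℕ) x - eTvec d π τ ((r : ℕ) + 1) x)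
      = fun x => if ((τ⁻¹ r : Fin d) : ℕ) < ((π x : Fin (d+1)) : ℕ) then (1:ℝ) else 0 := by
  funext x
  simp only [eTvec]
  set p := ((π x : Fin (d+1)) : ℕ) with hp
  have hsplit : (Finset.univ.filter fun j : Fin d => (j : ℕ) < p ∧ (r : ℕ) ≤ (τ j : ℕ))
      = (Finset.univ.filter fun j : Fin d => (j : ℕ) < p ∧ (r : ℕ) + 1 ≤ (τ j : ℕ))
        ∪ (Finset.univ.filter fun j : Fin d => (j : ℕ) < p ∧ (τ j : ℕ) = (r : ℕ)) := by
    ext j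
    simp only [Finset.mem_filter, Finset.mem_union, Finset.mem_univ, true_and]
    omega
  have hdisj : Disjoint
      (Finset.univ.filter fun j : Fin d => (j : ℕ) < p ∧ (r : ℕ) + 1 ≤ (τ j : ℕ))
      (Finset.univ.filter fun j : Fin d => (j : ℕ) < p ∧ (τ j : ℕ) = (r : ℕ)) := by
    rw [Finset.disjoint_filter]
    intro j _ h1 h2
    omega
  have hsingle : (Finset.univ.filter fun j : Fin d => (j : ℕ) < p ∧ (τ j : ℕ) = (r : ℕ))
      = if ((τ⁻¹ r : Fin d) : ℕ) < p then {τ⁻¹ r} else ∅ := by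
    ext j
    have hjr : (τ j : ℕ) = (r : ℕ) ↔ j = τ⁻¹ r := by
      rw [Fin.val_eq_val]
      constructor
      · intro h; simp [← h]
      · intro h; simp [h]
    by_cases hc : ((τ⁻¹ r : Fin d) : ℕ) < p
    · simp only [hc, if_true, Finset.mem_filter, Finset.mem_univ, true_and,
        Finset.mem_singleton, hjr]
      exact ⟨fun h => h.2, fun h => ⟨h ▸ hc, h⟩⟩
    · simp only [hc, if_false, Finset.notMem_empty, iff_false, Finset.mem_filter,
        Finset.mem_univ, true_and, hjr, not_and]
      intro h1 h2; exact hc (h2 ▸ h1)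
  rw [hsplit, Finset.card_union_of_disjoint hdisj, hsingle]
  by_cases hc : ((τ⁻¹ r : Fin d) : ℕ) < p <;> simp only [hc, ↓reduceIte] <;> simp
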